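/- The first-order Sobol' index of a variable Z_j for the multilinear model, under independent Uniform[0,1] inputs, equals (1/12)(φ^B_j)², where φ^B_j is the Banzhaf power index of criterion j. -/

import Mathlib

open Finset MeasureTheory

/-- The multilinear model of a capacity. -/
def FML {m : ℕ} (μ : Finset (Fin m) → ℝ) (v : Fin m → ℝ) : ℝ :=
  ∑ A : Finset (Fin m), μ A * (∏ j ∈ A, v j) * (∏ j ∈ Aᶜ, (1 - v j))

/-- A capacity: normalized monotone set function. -/
def IsCapacity {m : ℕ} (μ : Finset (Fin m) → ℝ) : Prop :=
  μ ∅ = 0 ∧ μ univ = 1 ∧ ∀ A B : Finset (Fin m), A ⊆ B → μ A ≤ μ B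

/-- The Banzhaf power index of criterion `j`. -/
noncomputable def banzhafPower {m : ℕ} (μ : Finset (Fin m) → ℝ) (j : Fin m) : ℝ :=
  (1 / 2 ^ (m - 1)) * ∑ D ∈ ({j}ᶜ : Finset (Fin m)).powerset, (μ (D ∪ {j}) - μ D)

/-- The joint law of `m` independent Uniform[0,1] random variables. -/
noncomputable def unifPi (m : ℕ) : Measure (Fin m → ℝ) :=
  Measure.pi fun _ => volume.restrict (Set.Icc (0 : ℝ) 1)

/-- Conditional expectation of `f` given the coordinates in `D` (for independent
Uniform[0,1] inputs): integrate out the remaining coordinates. -/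
noncomputable def condE {m : ℕ} (D : Finset (Fin m)) (f : (Fin m → ℝ) → ℝ)
    (v : Fin m → ℝ) : ℝ :=
  ∫ w, f (fun j => if j ∈ D then v j else w j) ∂(unifPi m)

/-- Variance with respect to the uniform product law. -/
noncomputable def varUnif {m : ℕ} (g : (Fin m → ℝ) → ℝ) : ℝ :=
  ∫ v, (g v - ∫ w, g w ∂(unifPi m)) ^ 2 ∂(unifPi m)

/-! ### Auxiliary material -/

/-- The uniform measure on `[0,1]`. -/
noncomputable def nuI : Measure ℝ := volume.restrict (Set.Icc (0:ℝ) 1)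

instance : IsProbabilityMeasure nuI := by
  constructor
  simp [nuI, Real.volume_Icc]

lemma unifPi_eq (m : ℕ) : unifPi m = Measure.pi fun _ : Fin m => nuI := rfl

instance (m : ℕ) : IsProbabilityMeasure (unifPi m) := by
  rw [unifPi_eq]
  infer_instance

lemma Inu_id : ∫ x, x ∂nuI = 1/2 := by
  rw [nuI, MeasureTheory.integral_Icc_eq_integral_Ioc,
    ← intervalIntegral.integral_of_le (by norm_num : (0:ℝ) ≤ 1)]
  simp

lemma Inu_one_sub : ∫ x, (1 - x) ∂nuI = 1/2 := by
  rw [nuI, MeasureTheory.integral_Icc_eq_integral_Ioc,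
    ← intervalIntegral.integral_of_le (by norm_num : (0:ℝ) ≤ 1)]
  rw [intervalIntegral.integral_sub intervalIntegrable_const intervalIntegral.intervalIntegrable_id]
  simp
  norm_num

lemma Inu_sq : ∫ x, (x - 1/2)^2 ∂nuI = 1/12 := by
  rw [nuI, MeasureTheory.integral_Icc_eq_integral_Ioc,
    ← intervalIntegral.integral_of_le (by norm_num : (0:ℝ) ≤ 1)]
  have h : ∀ x : ℝ, (x - 1/2)^2 = x^2 - x + 1/4 := by intro x; ring
  simp_rw [h]
  rw [intervalIntegral.integral_add ((intervalIntegral.intervalIntegrable_pow 2).sub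
      intervalIntegral.intervalIntegrable_id) intervalIntegrable_const,
    intervalIntegral.integral_sub (intervalIntegral.intervalIntegrable_pow 2)
      intervalIntegral.intervalIntegrable_id]
  simp
  norm_num

lemma Inu_integrable_id : Integrable (fun x : ℝ => x) nuI :=
  continuous_id.integrableOn_Icc

lemma pi_integral {ι : Type*} [Fintype ι] {E : Type*} [MeasurableSpace E]
    (ν : Measure E) [SigmaFinite ν] (f : ι → E → ℝ) :
    ∫ x : ι → E, ∏ i, f i (x i) ∂(Measure.pi fun _ => ν) = ∏ i, ∫ x, f i x ∂ν := by
  letI : MeasureSpace E := ⟨ν⟩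
  exact integral_fintype_prod_eq_prod f

lemma pi_integrable {ι : Type*} [Fintype ι] {E : Type*} [MeasurableSpace E]
    (ν : Measure E) [SigmaFinite ν] {f : ι → E → ℝ} (hf : ∀ i, Integrable (f i) ν) :
    Integrable (fun x : ι → E => ∏ i, f i (x i)) (Measure.pi fun _ => ν) := by
  letI : MeasureSpace E := ⟨ν⟩
  exact Integrable.fintype_prod hf

section coord
variable {m : ℕ} (j : Fin m)

lemma coord_rep (f : ℝ → ℝ) :
    (fun w : Fin m → ℝ => f (w j)) = fun w => ∏ i, (if i = j then f (w i) else 1) := by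
  funext w
  rw [Finset.prod_eq_single j (fun b _ hb => if_neg hb) (fun h => absurd (mem_univ j) h)]
  simp

lemma coord_integral (f : ℝ → ℝ) :
    ∫ w : Fin m → ℝ, f (w j) ∂(Measure.pi fun _ => nuI) = ∫ x, f x ∂nuI := by
  rw [coord_rep j f]
  calc ∫ w : Fin m → ℝ, ∏ i, (if i = j then f (w i) else 1) ∂(Measure.pi fun _ => nuI)
      = ∏ i, ∫ x, (if i = j then f x else 1) ∂nuI :=
        pi_integral nuI (fun i t => if i = j then f t else 1)
    _ = ∫ x, f x ∂nuI := by
        rw [← Finset.mul_prod_erase univ _ (mem_univ j)]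
        rw [Finset.prod_congr rfl (fun i hi => by
          simp only [Finset.mem_erase] at hi
          simp [hi.1] : ∀ i ∈ univ.erase j,
            (∫ x, (if i = j then f x else 1) ∂nuI) = 1)]
        simp

lemma coord_integrable (f : ℝ → ℝ) (hf : Integrable f nuI) :
    Integrable (fun w : Fin m → ℝ => f (w j)) (Measure.pi fun _ => nuI) := by
  rw [coord_rep j f]
  refine pi_integrable nuI (f := fun (i : Fin m) (t : ℝ) => if i = j then f t else 1)
    (fun i => ?_)
  by_cases hi : i = j
  · simpa [hi] using hf
  · simp [hi]

end coord

lemma condE_FML {m : ℕ} (μ : Finset (Fin m) → ℝ) (j : Fin m) (v : Fin m → ℝ) :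
    condE {j} (FML μ) v
      = ∑ A : Finset (Fin m), μ A * ((if j ∈ A then v j else 1 - v j) * (1/2)^(m-1)) := by
  classical
  set g : Finset (Fin m) → Fin m → ℝ → ℝ := fun A i t =>
    if i ∈ A then (if i ∈ ({j} : Finset (Fin m)) then v i else t)
    else 1 - (if i ∈ ({j} : Finset (Fin m)) then v i else t) with hg
  have hrep : ∀ (A : Finset (Fin m)) (w : Fin m → ℝ),
      μ A * (∏ i ∈ A, (if i ∈ ({j} : Finset (Fin m)) then v i else w i)) *
        (∏ i ∈ Aᶜ, (1 - if i ∈ ({j} : Finset (Fin m)) then v i else w i))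
      = μ A * ∏ i, g A i (w i) := by
    intro A w
    rw [mul_assoc]
    congr 1
    rw [hg]
    rw [Finset.prod_ite (fun i => if i ∈ ({j} : Finset (Fin m)) then v i else w i)
      (fun i => 1 - if i ∈ ({j} : Finset (Fin m)) then v i else w i)]
    congr 1
    · apply Finset.prod_congr _ (fun _ _ => rfl)
      ext i; simp
    · apply Finset.prod_congr _ (fun _ _ => rfl)
      ext i; simp
  have hint : ∀ (A : Finset (Fin m)) (i : Fin m), Integrable (g A i) nuI := by
    intro A i
    apply Continuous.integrableOn_Icc
    rw [hg]
    by_cases h1 : i ∈ A <;> by_cases h2 : i ∈ ({j} : Finset (Fin m)) <;>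
      simp only [h1, h2, if_true, if_false] <;> fun_prop
  have hIg : ∀ A : Finset (Fin m),
      (∏ i, ∫ x, g A i x ∂nuI) = (if j ∈ A then v j else 1 - v j) * (1/2)^(m-1) := by
    intro A
    rw [← Finset.mul_prod_erase univ _ (mem_univ j)]
    have h1 : (∫ x, g A j x ∂nuI) = if j ∈ A then v j else 1 - v j := by
      rw [hg]
      by_cases h : j ∈ A <;> simp [h]
    have h2 : ∀ i ∈ univ.erase j, (∫ x, g A i x ∂nuI) = 1/2 := by
      intro i hi
      simp only [Finset.mem_erase] at hi
      rw [hg]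
      by_cases h : i ∈ A <;> simp only [h, if_true, if_false, Finset.mem_singleton, hi.1]
      · simpa using Inu_id
      · simpa using Inu_one_sub
    rw [h1, Finset.prod_congr rfl h2, Finset.prod_const, Finset.card_erase_of_mem (mem_univ j)]
    simp
  calc condE {j} (FML μ) v
      = ∫ w, ∑ A : Finset (Fin m), μ A * ∏ i, g A i (w i) ∂(unifPi m) := by
        unfold condE FML
        congr 1
        funext w
        exact Finset.sum_congr rfl fun A _ => hrep A w
    _ = ∑ A : Finset (Fin m), ∫ w, μ A * ∏ i, g A i (w i) ∂(unifPi m) := by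
        apply integral_finset_sum
        intro A _
        exact ((pi_integrable nuI (hint A)).const_mul (μ A))
    _ = ∑ A : Finset (Fin m), μ A * ((if j ∈ A then v j else 1 - v j) * (1/2)^(m-1)) := by
        refine Finset.sum_congr rfl fun A _ => ?_
        rw [MeasureTheory.integral_const_mul, unifPi_eq, pi_integral nuI (g A), hIg A]

lemma banzhaf_eq {m : ℕ} (μ : Finset (Fin m) → ℝ) (j : Fin m) :
    banzhafPower μ j = ((1:ℝ)/2)^(m-1) *
      ((∑ A ∈ univ.filter (fun A : Finset (Fin m) => j ∈ A), μ A)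
        - ∑ A ∈ univ.filter (fun A : Finset (Fin m) => j ∉ A), μ A) := by
  classical
  have h1 : ∑ D ∈ ({j}ᶜ : Finset (Fin m)).powerset, μ (D ∪ {j})
      = ∑ A ∈ univ.filter (fun A => j ∈ A), μ A := by
    apply Finset.sum_nbij' (i := fun D => D ∪ {j}) (j := fun A => A.erase j)
    · intro D hD
      simp only [Finset.mem_powerset, Finset.subset_compl_singleton] at hD
      simp [Finset.mem_union]
    · intro A hA
      simp only [Finset.mem_filter] at hA
      simp [Finset.mem_powerset, Finset.subset_compl_singleton]
    · intro D hD
      simp only [Finset.mem_powerset, Finset.subset_compl_singleton] at hD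
      ext i
      simp only [Finset.mem_erase, Finset.mem_union, Finset.mem_singleton]
      constructor
      · rintro ⟨h1, h2 | h2⟩
        · exact h2
        · exact absurd h2 h1
      · intro h; exact ⟨fun e => hD (e ▸ h), Or.inl h⟩
    · intro A hA
      simp only [Finset.mem_filter] at hA
      ext i
      simp only [Finset.mem_union, Finset.mem_singleton, Finset.mem_erase]
      constructor
      · rintro (⟨_, h⟩ | h)
        · exact h
        · exact h ▸ hA.2
      · intro h; by_cases hi : i = j
        · exact Or.inr hi
        · exact Or.inl ⟨hi, h⟩
    · intro D hD; rfl
  have h2 : ({j}ᶜ : Finset (Fin m)).powerset = univ.filter (fun A => j ∉ A) := by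
    ext A
    simp [Finset.subset_compl_singleton]
  rw [banzhafPower, Finset.sum_sub_distrib, h1, h2, one_div, ← inv_pow, ← one_div]

/-- The first-order Sobol' index of variable `Z_j` for the multilinear model equals
`(1/12) (φ^B_j)²`. -/
theorem first_order_sobol_multilinear {m : ℕ} (μ : Finset (Fin m) → ℝ)
    (hμ : IsCapacity μ) (j : Fin m) :
    varUnif (condE {j} (FML μ)) = (1 / 12) * (banzhafPower μ j) ^ 2 := by
  classical
  set q : ℝ := ((1:ℝ)/2)^(m-1) with hq
  set S1 : ℝ := ∑ A ∈ univ.filter (fun A : Finset (Fin m) => j ∈ A), μ A with hS1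
  set S0 : ℝ := ∑ A ∈ univ.filter (fun A : Finset (Fin m) => j ∉ A), μ A with hS0
  set b : ℝ := q * (S1 - S0) with hb
  set C : ℝ := q * S0 with hC
  have hcond : condE {j} (FML μ) = fun v => C + b * v j := by
    funext v
    rw [condE_FML]
    rw [← Finset.sum_filter_add_sum_filter_not univ (fun A : Finset (Fin m) => j ∈ A)]
    have e1 : ∑ A ∈ univ.filter (fun A : Finset (Fin m) => j ∈ A),
        μ A * ((if j ∈ A then v j else 1 - v j) * q) = S1 * (v j * q) := by
      rw [hS1, Finset.sum_mul]
      refine Finset.sum_congr rfl fun A hA => ?_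
      simp only [Finset.mem_filter] at hA
      rw [if_pos hA.2]
    have e2 : ∑ A ∈ univ.filter (fun A : Finset (Fin m) => ¬ j ∈ A),
        μ A * ((if j ∈ A then v j else 1 - v j) * q) = S0 * ((1 - v j) * q) := by
      rw [hS0, Finset.sum_mul]
      refine Finset.sum_congr rfl fun A hA => ?_
      simp only [Finset.mem_filter] at hA
      rw [if_neg hA.2]
    rw [e1, e2, hb, hC]
    ring
  rw [hcond]
  unfold varUnif
  have hM : ∫ w, (C + b * w j) ∂(unifPi m) = C + b * (1/2) := by
    rw [unifPi_eq, integral_add (integrable_const C)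
      ((coord_integrable j (fun t => t) Inu_integrable_id).const_mul b),
      MeasureTheory.integral_const]
    rw [MeasureTheory.integral_const_mul, coord_integral j (fun t => t), Inu_id]
    simp
  rw [hM]
  have hpt : ∀ v : Fin m → ℝ, (C + b * v j - (C + b * (1/2)))^2 = b^2 * ((v j - 1/2)^2) := by
    intro v; ring
  simp_rw [hpt]
  rw [MeasureTheory.integral_const_mul, unifPi_eq, coord_integral j (fun t => (t - 1/2)^2),
    Inu_sq, banzhaf_eq]
  ring
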